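/- Fix an integer q≥3 and set a(x) = ((q−1)e^x − e^{2x})/(e^x+q−1)³ for x≥0, and for t>0 and r∈ℝ set Φ(t) = ∫_t^∞ x^r·a(x) dx. Then: (i) for every r≥0, lim_{t→0+} Φ(t) = ∫_0^∞ x^r·a(x) dx is finite and strictly negative; (ii) for every r≤−1, lim_{t→0+} Φ(t) = +∞ (the integral ∫_0^∞ x^r·a(x)dx diverges to +∞); (iii) for r∈(−1,0) the integral L_q(r) = ∫_0^∞ x^r·a(x) dx is finite and L_q(r) → +∞ as r↓−1. -/

import Mathlib

open MeasureTheory Filter Topology Set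

/-- `a(x) = ((q−1)e^x − e^{2x})/(e^x+q−1)³`. -/
noncomputable def afun (q : ℝ) (x : ℝ) : ℝ :=
  ((q - 1) * Real.exp x - Real.exp (2 * x)) / (Real.exp x + q - 1) ^ 3



lemma denom_pos {q : ℝ} (hq : 3 ≤ q) (x : ℝ) : 0 < Real.exp x + q - 1 := by
  have := Real.exp_pos x; linarith

lemma afun_eq {q : ℝ} (x : ℝ) :
    afun q x = Real.exp x * (q - 1 - Real.exp x) / (Real.exp x + q - 1) ^ 3 := by
  unfold afun
  rw [two_mul, Real.exp_add]
  ring_nf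

lemma afun_abs_le {q : ℝ} (hq : 3 ≤ q) (x : ℝ) : |afun q x| ≤ Real.exp (-x) := by
  have hD := denom_pos hq x
  have hE := Real.exp_pos x
  rw [afun_eq, abs_div, abs_of_pos (by positivity : (0:ℝ) < (Real.exp x + q - 1) ^ 3)]
  rw [div_le_iff₀ (by positivity)]
  have h1 : |Real.exp x * (q - 1 - Real.exp x)| ≤ Real.exp x * (Real.exp x + q - 1) := by
    rw [abs_mul, abs_of_pos hE]
    have : |q - 1 - Real.exp x| ≤ Real.exp x + q - 1 := by
      rw [abs_le]; constructor <;> nlinarith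
    nlinarith
  have h2 : Real.exp x * (Real.exp x + q - 1) ≤ Real.exp (-x) * (Real.exp x + q - 1) ^ 3 := by
    have h3 : Real.exp x ≤ Real.exp (-x) * (Real.exp x + q - 1) ^ 2 := by
      have : Real.exp (-x) * Real.exp x = 1 := by
        rw [← Real.exp_add]; simp
      nlinarith [Real.exp_pos (-x), sq_nonneg (Real.exp x + q - 1), Real.exp_pos x]
    nlinarith
  linarith

lemma afun_continuous {q : ℝ} (hq : 3 ≤ q) : Continuous (afun q) := by
  unfold afun
  exact (Continuous.sub (continuous_const.mul Real.continuous_exp)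
      (Real.continuous_exp.comp (continuous_const.mul continuous_id))).div
    (((Real.continuous_exp.add continuous_const).sub continuous_const).pow 3)
    (fun x => pow_ne_zero 3 (denom_pos hq x).ne')

lemma integrableOn_main {q : ℝ} (hq : 3 ≤ q) {r : ℝ} (hr : -1 < r) :
    IntegrableOn (fun x : ℝ => x ^ r * afun q x) (Ioi 0) := by
  have hG := Real.GammaIntegral_convergent (show (0:ℝ) < r + 1 by linarith)
  simp only [add_sub_cancel_right] at hG
  refine Integrable.mono hG ?_ ?_
  · exact ((continuousOn_id.rpow_const fun x hx => Or.inl (ne_of_gt hx)).mul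
      (afun_continuous hq).continuousOn).aestronglyMeasurable measurableSet_Ioi
  · filter_upwards [ae_restrict_mem measurableSet_Ioi] with x hx
    have hx0 : (0:ℝ) < x := hx
    rw [Real.norm_eq_abs, Real.norm_eq_abs, abs_mul, abs_of_nonneg (Real.rpow_nonneg hx0.le r),
      abs_of_pos (by positivity : (0:ℝ) < Real.exp (-x) * x ^ r)]
    have := afun_abs_le hq x
    nlinarith [Real.rpow_nonneg hx0.le r, abs_nonneg (afun q x)]




lemma integrable_afun {q : ℝ} (hq : 3 ≤ q) : IntegrableOn (afun q) (Ioi 0) := by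
  refine Integrable.mono (g := fun x => Real.exp (-1 * x))
    (exp_neg_integrableOn_Ioi 0 one_pos)
    ((afun_continuous hq).aestronglyMeasurable.restrict) ?_
  filter_upwards with x
  rw [Real.norm_eq_abs, Real.norm_eq_abs, neg_one_mul,
    abs_of_pos (Real.exp_pos _)]
  exact afun_abs_le hq x

lemma hasDerivAt_F {q : ℝ} (hq : 3 ≤ q) (x : ℝ) :
    HasDerivAt (fun y => Real.exp y / (Real.exp y + q - 1) ^ 2) (afun q x) x := by
  have hD := denom_pos hq x
  have h1 : HasDerivAt (fun y => (Real.exp y + q - 1) ^ 2)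
      (2 * (Real.exp x + q - 1) * Real.exp x) x := by
    have := ((Real.hasDerivAt_exp x).add_const (q - 1)).fun_pow 2
    simp only [Nat.cast_ofNat, pow_one] at this
    convert this using 1
    · rfl
    · rfl
    · funext y; ring
    · norm_num; ring
  have h2 : HasDerivAt (fun y => Real.exp y / (Real.exp y + q - 1) ^ 2) _ x :=
    (Real.hasDerivAt_exp x).div h1 (pow_ne_zero 2 hD.ne')
  convert h2 using 1
  rw [afun_eq]
  field_simp
  ring

lemma integral_afun {q : ℝ} (hq : 3 ≤ q) :
    ∫ x in Ioi (0:ℝ), afun q x = -(1 / q ^ 2) := by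
  have hq0 : (0:ℝ) < q := by linarith
  have hcontF : Continuous (fun y => Real.exp y / (Real.exp y + q - 1) ^ 2) :=
    Real.continuous_exp.div
      (((Real.continuous_exp.add continuous_const).sub continuous_const).pow 2)
      (fun y => pow_ne_zero 2 (denom_pos hq y).ne')
  have htend : Tendsto (fun y => Real.exp y / (Real.exp y + q - 1) ^ 2) atTop (𝓝 0) := by
    apply tendsto_of_tendsto_of_tendsto_of_le_of_le tendsto_const_nhds
      Real.tendsto_exp_neg_atTop_nhds_zero
    · intro y; positivity
    · intro y
      have hD := denom_pos hq y
      have hE := Real.exp_pos y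
      show Real.exp y / (Real.exp y + q - 1) ^ 2 ≤ Real.exp (-y)
      rw [div_le_iff₀ (by positivity), Real.exp_neg, inv_mul_eq_div, le_div_iff₀ hE]
      nlinarith
  have := integral_Ioi_of_hasDerivAt_of_tendsto hcontF.continuousWithinAt
    (fun x _ => hasDerivAt_F hq x) (integrable_afun hq) htend
  rw [this]
  rw [Real.exp_zero]
  rw [show (1:ℝ) + q - 1 = q by ring]
  ring

lemma afun_nonneg {q : ℝ} (hq : 3 ≤ q) {x : ℝ} (hx : Real.exp x ≤ q - 1) :
    0 ≤ afun q x := by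
  rw [afun_eq]
  have h1 := Real.exp_pos x
  have h2 := denom_pos hq x
  exact div_nonneg (mul_nonneg h1.le (by linarith)) (by positivity)

lemma afun_nonpos {q : ℝ} (hq : 3 ≤ q) {x : ℝ} (hx : q - 1 ≤ Real.exp x) :
    afun q x ≤ 0 := by
  rw [afun_eq]
  apply div_nonpos_of_nonpos_of_nonneg
  · nlinarith [Real.exp_pos x]
  · have := denom_pos hq x; positivity

lemma integral_neg_main {q : ℝ} (hq : 3 ≤ q) {r : ℝ} (hr : 0 ≤ r) :
    (∫ x in Ioi (0:ℝ), x ^ r * afun q x) < 0 := by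
  set L := Real.log (q - 1) with hL
  have hq1 : (2:ℝ) ≤ q - 1 := by linarith
  have hLpos : 0 < L := Real.log_pos (by linarith)
  have hexpL : Real.exp L = q - 1 := Real.exp_log (by linarith)
  have hmono : ∀ x ∈ Ioi (0:ℝ), x ^ r * afun q x ≤ L ^ r * afun q x := by
    intro x hx
    have hx0 : (0:ℝ) < x := hx
    rcases le_total x L with h | h
    · refine mul_le_mul_of_nonneg_right (Real.rpow_le_rpow hx0.le h hr) ?_
      exact afun_nonneg hq (by rw [← hexpL]; exact Real.exp_le_exp.mpr h)
    · refine mul_le_mul_of_nonpos_right (Real.rpow_le_rpow hLpos.le h hr) ?_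
      exact afun_nonpos hq (by rw [← hexpL]; exact Real.exp_le_exp.mpr h)
  have hint1 := integrableOn_main hq (show (-1:ℝ) < r by linarith)
  have hint2 : IntegrableOn (fun x : ℝ => L ^ r * afun q x) (Ioi 0) :=
    (integrable_afun hq).const_mul _
  have := setIntegral_mono_on hint1 hint2 measurableSet_Ioi hmono
  have heq : ∫ x in Ioi (0:ℝ), L ^ r * afun q x = L ^ r * ∫ x in Ioi (0:ℝ), afun q x :=
    integral_const_mul _ _
  rw [heq, integral_afun hq] at this
  have hLr : 0 < L ^ r := Real.rpow_pos_of_pos hLpos r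
  have hq2 : 0 < 1 / q ^ 2 := by positivity
  nlinarith




lemma tendsto_tail {g : ℝ → ℝ} (hg : IntegrableOn g (Ioi 0)) :
    Tendsto (fun t => ∫ x in Ioi t, g x) (𝓝[>] (0:ℝ))
      (𝓝 (∫ x in Ioi (0:ℝ), g x)) := by
  have hIcc : IntegrableOn g (Icc 0 1) := by
    rw [integrableOn_Icc_iff_integrableOn_Ioc]
    exact hg.mono_set (Ioc_subset_Ioi_self)
  have hcwa : ContinuousWithinAt (fun x => ∫ t in Ioc (0:ℝ) x, g t) (Icc 0 1) 0 :=
    intervalIntegral.continuousOn_primitive hIcc 0 ⟨le_refl 0, zero_le_one⟩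
  have hmem : Icc (0:ℝ) 1 ∈ 𝓝[>] (0:ℝ) := by
    refine mem_nhdsWithin.mpr ⟨Iio 1, isOpen_Iio, by norm_num, ?_⟩
    rintro x ⟨hx1, hx2⟩
    exact ⟨le_of_lt hx2, le_of_lt hx1⟩
  have hle : 𝓝[>] (0:ℝ) ≤ 𝓝[Icc 0 1] (0:ℝ) := nhdsWithin_le_of_mem hmem
  have htail0 : Tendsto (fun t => ∫ x in Ioc (0:ℝ) t, g x) (𝓝[>] (0:ℝ)) (𝓝 0) := by
    have := hcwa.mono_left hle
    simpa using this
  have hmain : Tendsto (fun t => (∫ x in Ioi (0:ℝ), g x) - ∫ x in Ioc (0:ℝ) t, g x)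
      (𝓝[>] (0:ℝ)) (𝓝 ((∫ x in Ioi (0:ℝ), g x) - 0)) := tendsto_const_nhds.sub htail0
  rw [sub_zero] at hmain
  refine hmain.congr' ?_
  filter_upwards [self_mem_nhdsWithin] with t ht
  have ht0 : (0:ℝ) < t := ht
  have hsplit : ∫ x in Ioi (0:ℝ), g x
      = (∫ x in Ioc (0:ℝ) t, g x) + ∫ x in Ioi t, g x := by
    rw [← Ioc_union_Ioi_eq_Ioi ht0.le]
    exact setIntegral_union (Ioc_disjoint_Ioi le_rfl) measurableSet_Ioi
      (hg.mono_set (Ioc_subset_Ioi_self))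
      (hg.mono_set (Ioi_subset_Ioi ht0.le))
  rw [hsplit]; ring

lemma exp_half_lt_two : Real.exp (1/2 : ℝ) < 2 := by
  have h1 : Real.exp (1/2 : ℝ) * Real.exp (1/2 : ℝ) = Real.exp 1 := by
    rw [← Real.exp_add]; norm_num
  nlinarith [Real.exp_pos (1/2 : ℝ), Real.exp_one_lt_d9]

lemma afun_lower {q : ℝ} (hq : 3 ≤ q) {x : ℝ} (hx : x ∈ Ioc (0:ℝ) (1/2)) :
    (q - 1 - Real.exp (1/2 : ℝ)) / (q + 1) ^ 3 ≤ afun q x := by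
  obtain ⟨hx0, hx2⟩ := hx
  have hE1 : 1 ≤ Real.exp x := Real.one_le_exp hx0.le
  have hE2 : Real.exp x ≤ Real.exp (1/2 : ℝ) := Real.exp_le_exp.mpr hx2
  have h2 := exp_half_lt_two
  have hD := denom_pos hq x
  rw [afun_eq]
  refine div_le_div₀ (by nlinarith) (by nlinarith) (by positivity) ?_
  refine pow_le_pow_left₀ hD.le (by nlinarith) 3

lemma cpos {q : ℝ} (hq : 3 ≤ q) : 0 < (q - 1 - Real.exp (1/2 : ℝ)) / (q + 1) ^ 3 := by
  have := exp_half_lt_two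
  apply div_pos (by linarith) (by positivity)

lemma integrableOn_tail {q : ℝ} (hq : 3 ≤ q) {r t : ℝ} (hr : r ≤ 0) (ht : 0 < t) :
    IntegrableOn (fun x : ℝ => x ^ r * afun q x) (Ioi t) := by
  refine Integrable.mono (g := fun x => t ^ r * Real.exp (-1 * x))
    ((exp_neg_integrableOn_Ioi t one_pos).const_mul _) ?_ ?_
  · refine (ContinuousOn.mul ?_ (afun_continuous hq).continuousOn).aestronglyMeasurable
      measurableSet_Ioi
    exact continuousOn_id.rpow_const fun x hx => Or.inl (ne_of_gt (ht.trans hx))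
  · filter_upwards [ae_restrict_mem measurableSet_Ioi] with x hx
    have hx0 : t < x := hx
    have h1 : x ^ r ≤ t ^ r := Real.rpow_le_rpow_of_nonpos ht hx0.le hr
    have h2 := afun_abs_le hq x
    rw [Real.norm_eq_abs, Real.norm_eq_abs, abs_mul,
      abs_of_nonneg (Real.rpow_nonneg (ht.trans hx0).le r), neg_one_mul,
      abs_of_pos (by positivity : (0:ℝ) < t ^ r * Real.exp (-x))]
    have := Real.rpow_nonneg (ht.trans hx0).le r
    nlinarith [abs_nonneg (afun q x), Real.exp_pos (-x)]




lemma tail_bound {q : ℝ} (hq : 3 ≤ q) {r : ℝ} (hr1 : -1 ≤ r) (hr0 : r ≤ 0) :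
    -2 ≤ ∫ x in Ioi (1/2:ℝ), x ^ r * afun q x := by
  have hb : ∀ x ∈ Ioi (1/2:ℝ), ‖x ^ r * afun q x‖ ≤ 2 * Real.exp (-1 * x) := by
    intro x hx
    have hx0 : (1/2:ℝ) < x := hx
    have h1 : x ^ r ≤ (1/2:ℝ) ^ r := Real.rpow_le_rpow_of_nonpos one_half_pos hx0.le hr0
    have h2 : ((1:ℝ)/2) ^ r ≤ ((1:ℝ)/2) ^ (-1:ℝ) :=
      Real.rpow_le_rpow_of_exponent_ge one_half_pos (by norm_num) hr1
    rw [Real.rpow_neg_one] at h2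
    norm_num at h2
    have h3 := afun_abs_le hq x
    rw [Real.norm_eq_abs, abs_mul, abs_of_nonneg (Real.rpow_nonneg (by linarith) r),
      neg_one_mul]
    have h4 : (0:ℝ) ≤ x ^ r := Real.rpow_nonneg (by linarith) r
    nlinarith [abs_nonneg (afun q x), Real.exp_pos (-x)]
  have hint := integrableOn_tail hq hr0 (one_half_pos)
  have habs : ‖∫ x in Ioi (1/2:ℝ), x ^ r * afun q x‖
      ≤ ∫ x in Ioi (1/2:ℝ), 2 * Real.exp (-1 * x) := by
    refine (norm_integral_le_integral_norm _).trans ?_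
    refine setIntegral_mono_on hint.norm
      ((exp_neg_integrableOn_Ioi _ one_pos).const_mul _) measurableSet_Ioi hb
  have hval : ∫ x in Ioi (1/2:ℝ), 2 * Real.exp (-1 * x) = 2 * Real.exp (-(1/2:ℝ)) := by
    simp only [neg_one_mul]
    rw [integral_const_mul, integral_exp_neg_Ioi]
  rw [hval] at habs
  rw [Real.norm_eq_abs, abs_le] at habs
  have : Real.exp (-(1/2:ℝ)) ≤ 1 := Real.exp_le_one_iff.mpr (by norm_num)
  linarith [habs.1]

lemma phi_lower {q : ℝ} (hq : 3 ≤ q) {r : ℝ} (hr : r ≤ -1) {t : ℝ}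
    (ht : t ∈ Ioo (0:ℝ) (1/2)) :
    (q - 1 - Real.exp (1/2 : ℝ)) / (q + 1) ^ 3 * (Real.log (1/2) - Real.log t)
      + (∫ x in Ioi (1/2:ℝ), x ^ r * afun q x)
    ≤ ∫ x in Ioi t, x ^ r * afun q x := by
  obtain ⟨ht0, ht2⟩ := ht
  set c := (q - 1 - Real.exp (1/2 : ℝ)) / (q + 1) ^ 3 with hc
  have hr0 : r ≤ 0 := by linarith
  have hsplit : ∫ x in Ioi t, x ^ r * afun q x
      = (∫ x in Ioc t (1/2:ℝ), x ^ r * afun q x)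
        + ∫ x in Ioi (1/2:ℝ), x ^ r * afun q x := by
    rw [← Ioc_union_Ioi_eq_Ioi ht2.le]
    exact setIntegral_union (Ioc_disjoint_Ioi le_rfl) measurableSet_Ioi
      ((integrableOn_tail hq hr0 ht0).mono_set Ioc_subset_Ioi_self)
      (integrableOn_tail hq hr0 one_half_pos)
  have hptwise : ∀ x ∈ Ioc t (1/2:ℝ), c * x⁻¹ ≤ x ^ r * afun q x := by
    intro x hx
    have hx0 : (0:ℝ) < x := ht0.trans hx.1
    have h1 : x ^ (-1:ℝ) ≤ x ^ r :=
      Real.rpow_le_rpow_of_exponent_ge hx0 (by linarith [hx.2]) hr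
    rw [Real.rpow_neg_one] at h1
    have h2 : c ≤ afun q x := afun_lower hq ⟨hx0, hx.2⟩
    calc c * x⁻¹ = x⁻¹ * c := mul_comm _ _
      _ ≤ x ^ r * afun q x :=
        mul_le_mul h1 h2 (cpos hq).le (Real.rpow_nonneg hx0.le r)
  have hint1 : IntegrableOn (fun x : ℝ => c * x⁻¹) (Ioc t (1/2:ℝ)) := by
    refine IntegrableOn.mono_set ?_ Ioc_subset_Icc_self
    refine ContinuousOn.integrableOn_Icc ?_
    exact continuousOn_const.mul (continuousOn_id.inv₀ fun x hx =>
      ne_of_gt (lt_of_lt_of_le ht0 hx.1))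
  have hint2 : IntegrableOn (fun x : ℝ => x ^ r * afun q x) (Ioc t (1/2:ℝ)) :=
    (integrableOn_tail hq hr0 ht0).mono_set Ioc_subset_Ioi_self
  have hmono := setIntegral_mono_on hint1 hint2 measurableSet_Ioc hptwise
  have hval : ∫ x in Ioc t (1/2:ℝ), c * x⁻¹ = c * (Real.log (1/2) - Real.log t) := by
    rw [← intervalIntegral.integral_of_le ht2.le, intervalIntegral.integral_const_mul,
      integral_inv]
    · rw [Real.log_div (by norm_num) (ne_of_gt ht0)]
    · rw [Set.uIcc_of_le ht2.le]
      intro h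
      exact absurd h.1 (not_le.mpr ht0)
  rw [hsplit]
  rw [hval] at hmono
  linarith

lemma Ioo_mem_right : Ioo (0:ℝ) (1/2) ∈ 𝓝[>] (0:ℝ) :=
  mem_nhdsWithin.mpr ⟨Iio (1/2), isOpen_Iio, by norm_num, fun x hx => ⟨hx.2, hx.1⟩⟩

lemma phi_tendsto_atTop {q : ℝ} (hq : 3 ≤ q) {r : ℝ} (hr : r ≤ -1) :
    Tendsto (fun t : ℝ => ∫ x in Ioi t, x ^ r * afun q x) (𝓝[>] (0:ℝ)) atTop := by
  set c := (q - 1 - Real.exp (1/2 : ℝ)) / (q + 1) ^ 3 with hc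
  set C := ∫ x in Ioi (1/2:ℝ), x ^ r * afun q x with hC
  have hev : (fun t : ℝ => c * (Real.log (1/2) - Real.log t) + C)
      ≤ᶠ[𝓝[>] (0:ℝ)] (fun t : ℝ => ∫ x in Ioi t, x ^ r * afun q x) := by
    filter_upwards [Ioo_mem_right] with t ht
    exact phi_lower hq hr ht
  refine tendsto_atTop_mono' _ hev ?_
  · have h1 : Tendsto (fun t : ℝ => Real.log (1/2) - Real.log t) (𝓝[>] (0:ℝ)) atTop := by
      have h2 : Tendsto (fun t : ℝ => -Real.log t) (𝓝[>] (0:ℝ)) atTop :=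
        tendsto_neg_atBot_atTop.comp Real.tendsto_log_nhdsGT_zero
      have := tendsto_atTop_add_const_left (𝓝[>] (0:ℝ)) (Real.log (1/2)) h2
      refine this.congr fun t => ?_
      ring
    exact tendsto_atTop_add_const_right _ C (h1.const_mul_atTop (cpos hq))

lemma L_lower {q : ℝ} (hq : 3 ≤ q) {r : ℝ} (hr : r ∈ Ioo (-1:ℝ) 0) :
    (q - 1 - Real.exp (1/2 : ℝ)) / (q + 1) ^ 3 / 2 * (r + 1)⁻¹ - 2
      ≤ ∫ x in Ioi (0:ℝ), x ^ r * afun q x := by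
  obtain ⟨hr1, hr0⟩ := hr
  set c := (q - 1 - Real.exp (1/2 : ℝ)) / (q + 1) ^ 3 with hc
  have hcp := cpos hq
  have hrp : (0:ℝ) < r + 1 := by linarith
  have hsplit : ∫ x in Ioi (0:ℝ), x ^ r * afun q x
      = (∫ x in Ioc (0:ℝ) (1/2:ℝ), x ^ r * afun q x)
        + ∫ x in Ioi (1/2:ℝ), x ^ r * afun q x := by
    rw [← Ioc_union_Ioi_eq_Ioi one_half_pos.le]
    exact setIntegral_union (Ioc_disjoint_Ioi le_rfl) measurableSet_Ioi
      ((integrableOn_main hq hr1).mono_set Ioc_subset_Ioi_self)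
      ((integrableOn_main hq hr1).mono_set (Ioi_subset_Ioi one_half_pos.le))
  have hptwise : ∀ x ∈ Ioc (0:ℝ) (1/2:ℝ), c * x ^ r ≤ x ^ r * afun q x := by
    intro x hx
    rw [mul_comm]
    exact mul_le_mul_of_nonneg_left (afun_lower hq hx) (Real.rpow_nonneg hx.1.le r)
  have hint0 : IntegrableOn (fun x : ℝ => x ^ r) (Ioc (0:ℝ) (1/2:ℝ)) := by
    rw [← intervalIntegrable_iff_integrableOn_Ioc_of_le one_half_pos.le]
    exact intervalIntegral.intervalIntegrable_rpow' hr1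
  have hint1 : IntegrableOn (fun x : ℝ => c * x ^ r) (Ioc (0:ℝ) (1/2:ℝ)) :=
    hint0.const_mul _
  have hint2 : IntegrableOn (fun x : ℝ => x ^ r * afun q x) (Ioc (0:ℝ) (1/2:ℝ)) :=
    (integrableOn_main hq hr1).mono_set Ioc_subset_Ioi_self
  have hmono := setIntegral_mono_on hint1 hint2 measurableSet_Ioc hptwise
  have hval : ∫ x in Ioc (0:ℝ) (1/2:ℝ), c * x ^ r
      = c * ((1/2:ℝ) ^ (r+1) / (r+1)) := by
    rw [← intervalIntegral.integral_of_le one_half_pos.le,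
      intervalIntegral.integral_const_mul, integral_rpow (Or.inl hr1)]
    rw [Real.zero_rpow (ne_of_gt hrp)]
    ring_nf
  rw [hval] at hmono
  have hhalf : (1/2:ℝ) ≤ (1/2:ℝ) ^ (r+1) := by
    have := Real.rpow_le_rpow_of_exponent_ge (x := (1/2:ℝ)) one_half_pos (by norm_num)
      (show r + 1 ≤ 1 by linarith)
    rwa [Real.rpow_one] at this
  have hinv : (0:ℝ) < (r+1)⁻¹ := by positivity
  rw [← hc] at hcp
  have h6 : (1/2:ℝ) * (r+1)⁻¹ ≤ (1/2:ℝ) ^ (r+1) * (r+1)⁻¹ :=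
    mul_le_mul_of_nonneg_right hhalf hinv.le
  have h5 : c / 2 * (r + 1)⁻¹ ≤ c * ((1/2:ℝ) ^ (r+1) / (r+1)) := by
    rw [div_eq_mul_inv ((1/2:ℝ) ^ (r+1))]
    calc c / 2 * (r + 1)⁻¹ = c * ((1/2:ℝ) * (r+1)⁻¹) := by ring
      _ ≤ c * ((1/2:ℝ) ^ (r+1) * (r+1)⁻¹) := mul_le_mul_of_nonneg_left h6 hcp.le
  have htail := tail_bound hq hr1.le hr0.le
  rw [hsplit]
  linarith

lemma L_tendsto_atTop {q : ℝ} (hq : 3 ≤ q) :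
    Tendsto (fun r : ℝ => ∫ x in Ioi (0:ℝ), x ^ r * afun q x) (𝓝[>] (-1:ℝ)) atTop := by
  set c := (q - 1 - Real.exp (1/2 : ℝ)) / (q + 1) ^ 3 with hc
  have hIoo : Ioo (-1:ℝ) 0 ∈ 𝓝[>] (-1:ℝ) :=
    mem_nhdsWithin.mpr ⟨Iio 0, isOpen_Iio, by norm_num, fun x hx => ⟨hx.2, hx.1⟩⟩
  have hev : (fun r : ℝ => c / 2 * (r + 1)⁻¹ - 2)
      ≤ᶠ[𝓝[>] (-1:ℝ)] (fun r : ℝ => ∫ x in Ioi (0:ℝ), x ^ r * afun q x) := by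
    filter_upwards [hIoo] with r hr
    exact L_lower hq hr
  refine tendsto_atTop_mono' _ hev ?_
  · have hmap : Tendsto (fun r : ℝ => r + 1) (𝓝[>] (-1:ℝ)) (𝓝[>] (0:ℝ)) := by
      rw [tendsto_nhdsWithin_iff]
      constructor
      · have : Tendsto (fun r : ℝ => r + 1) (𝓝 (-1:ℝ)) (𝓝 ((-1:ℝ) + 1)) :=
          (continuous_id.add continuous_const).tendsto _
        rw [show ((-1:ℝ) + 1) = 0 by ring] at this
        exact this.mono_left nhdsWithin_le_nhds
      · filter_upwards [self_mem_nhdsWithin] with r hr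
        simpa using (by linarith [mem_Ioi.mp hr] : (0:ℝ) < r + 1)
    have hinv : Tendsto (fun r : ℝ => (r + 1)⁻¹) (𝓝[>] (-1:ℝ)) atTop :=
      tendsto_inv_nhdsGT_zero.comp hmap
    have hcp := cpos (q := q) hq
    exact (tendsto_atTop_add_const_right _ (-2) (hinv.const_mul_atTop
      (show (0:ℝ) < c / 2 by positivity))).congr fun r => (sub_eq_add_neg _ _).symm

/-- **Behavior of `Φ(t)=∫_t^∞ x^r a(x)dx` as `t→0+`**: (i) for `r ≥ 0` the limit is the
finite, strictly negative integral `∫_0^∞ x^r a(x)dx`; (ii) for `r ≤ −1` the integral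
diverges and `Φ(t)→+∞`; (iii) for `r ∈ (−1,0)` the integral `L_q(r)` is finite and
`L_q(r)→+∞` as `r↓−1`. -/
theorem pareto_phi_limits (q : ℕ) (hq : 3 ≤ q) :
    (∀ r : ℝ, 0 ≤ r →
      IntegrableOn (fun x : ℝ => x ^ r * afun q x) (Ioi 0) ∧
      (∫ x in Ioi (0 : ℝ), x ^ r * afun q x) < 0 ∧
      Tendsto (fun t : ℝ => ∫ x in Ioi t, x ^ r * afun q x) (𝓝[>] 0)
        (𝓝 (∫ x in Ioi (0 : ℝ), x ^ r * afun q x))) ∧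
    (∀ r : ℝ, r ≤ -1 →
      ¬ IntegrableOn (fun x : ℝ => x ^ r * afun q x) (Ioi 0) ∧
      Tendsto (fun t : ℝ => ∫ x in Ioi t, x ^ r * afun q x) (𝓝[>] 0) atTop) ∧
    (∀ r ∈ Ioo (-1 : ℝ) 0,
      IntegrableOn (fun x : ℝ => x ^ r * afun q x) (Ioi 0)) ∧
    Tendsto (fun r : ℝ => ∫ x in Ioi (0 : ℝ), x ^ r * afun q x) (𝓝[>] (-1)) atTop := by
  have hq' : (3:ℝ) ≤ (q:ℝ) := by exact_mod_cast hq
  refine ⟨?_, ?_, ?_, L_tendsto_atTop hq'⟩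
  · intro r hr
    exact ⟨integrableOn_main hq' (by linarith), integral_neg_main hq' hr,
      tendsto_tail (integrableOn_main hq' (by linarith))⟩
  · intro r hr
    have hdiv := phi_tendsto_atTop hq' hr
    refine ⟨fun hInt => not_tendsto_nhds_of_tendsto_atTop hdiv _ (tendsto_tail hInt), hdiv⟩
  · intro r hr
    exact integrableOn_main hq' hr.1
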